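/- Let α₁, …, αₙ be patterns over (Σ ∪ Ξ) and let L = ⋂ᵢ L(αᵢ) be the intersection of their erasing pattern languages. Then L = Σ* if and only if ε ∈ L and there exists a letter a ∈ Σ with a ∈ L. -/

import Mathlib

/-- Application of a pattern substitution `σ : Ξ → Σ*` to a pattern over `Σ ∪ Ξ`. -/
def patApply {A X : Type*} (σ : X → List A) (α : List (A ⊕ X)) : List A :=
  α.flatMap (Sum.elim (fun c => [c]) σ)

/-- The erasing pattern language of a pattern. -/
def patLang {A X : Type*} (α : List (A ⊕ X)) : Set (List A) :=
  {w | ∃ σ : X → List A, patApply σ α = w}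

lemma patApply_cons {A X : Type*} (σ : X → List A) (s : A ⊕ X) (α : List (A ⊕ X)) :
    patApply σ (s :: α) = Sum.elim (fun c => [c]) σ s ++ patApply σ α :=
  List.flatMap_cons

open Classical in
lemma patApply_key {A X : Type*} (a : A) (w : List A) (σ₀ σ : X → List A)
    (α : List (A ⊕ X)) (h0 : patApply σ₀ α = []) (h1 : patApply σ α = [a]) :
    patApply (fun y => if σ y = [] then [] else w) α = w := by
  induction α with
  | nil => simp [patApply] at h1
  | cons s t ih =>
    rw [patApply_cons] at h0 h1 ⊢
    cases s with
    | inl c => simp at h0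
    | inr x =>
      simp only [Sum.elim_inr] at h0 h1 ⊢
      rcases List.append_eq_nil_iff.mp h0 with ⟨-, h0t⟩
      rcases hx : σ x with _ | ⟨b, l⟩
      · rw [hx] at h1
        simp only [List.nil_append] at h1
        simp [hx, ih h0t h1]
      · rw [hx] at h1
        simp only [List.cons_append, List.cons.injEq] at h1
        rcases h1 with ⟨-, h1⟩
        rcases List.append_eq_nil_iff.mp h1 with ⟨hl, ht⟩
        have htz : patApply (fun y => if σ y = [] then [] else w) t = [] := by
          have : ∀ s' ∈ t, Sum.elim (fun c => [c]) σ s' = [] := List.flatMap_eq_nil_iff.mp ht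
          refine List.flatMap_eq_nil_iff.mpr fun s' hs' => ?_
          cases s' with
          | inl c => exact absurd (this _ hs') (by simp)
          | inr y =>
            have := this _ hs'
            simp only [Sum.elim_inr] at this ⊢
            simp [this]
        simp [hx, hl, htz]

theorem inter_patLang_univ_iff {A X : Type*} [Nonempty A] (n : ℕ)
    (α : Fin n → List (A ⊕ X)) :
    (⋂ i, patLang (α i)) = Set.univ ↔
      ([] ∈ ⋂ i, patLang (α i)) ∧ ∃ a : A, [a] ∈ ⋂ i, patLang (α i) := by
  constructor
  · intro h
    obtain ⟨a⟩ := ‹Nonempty A›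
    exact ⟨h ▸ Set.mem_univ _, a, h ▸ Set.mem_univ _⟩
  · rintro ⟨h0, a, h1⟩
    apply Set.eq_univ_of_forall
    intro w
    rw [Set.mem_iInter]
    intro i
    obtain ⟨σ₀, hσ₀⟩ := Set.mem_iInter.mp h0 i
    obtain ⟨σ, hσ⟩ := Set.mem_iInter.mp h1 i
    exact ⟨_, patApply_key a w σ₀ σ (α i) hσ₀ hσ⟩
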